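/- Two nondegenerate symmetric bilinear forms on finite-dimensional vector spaces over a finite field $\mathbb{F}_q$ of odd characteristic are equivalent (related by a linear isomorphism) if and only if they have the same dimension and their discriminants (determinants of Gram matrices) lie in the same coset of $(\mathbb{F}_q^\times)^2$ in $\mathbb{F}_q^\times$. -/

import Mathlib

open Matrix Polynomial

namespace EquivRankDisc

variable {F : Type*} [Field F]

/-- Congruence of square matrices. -/
def Cong {α : Type*} [Fintype α] [DecidableEq α] (M N : Matrix α α F) : Prop :=
  ∃ A : Matrix α α F, IsUnit A.det ∧ A * M * Aᵀ = N

section Basic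

variable {α : Type*} [Fintype α] [DecidableEq α]

lemma Cong.refl (M : Matrix α α F) : Cong M M :=
  ⟨1, by simp, by simp⟩

lemma Cong.trans {M N P : Matrix α α F} (h₁ : Cong M N) (h₂ : Cong N P) : Cong M P := by
  obtain ⟨A, hA, rfl⟩ := h₁
  obtain ⟨B, hB, rfl⟩ := h₂
  refine ⟨B * A, by simpa using (hB.mul hA), ?_⟩
  rw [transpose_mul]
  noncomm_ring

lemma Cong.symm {M N : Matrix α α F} (h : Cong M N) : Cong N M := by
  obtain ⟨A, hA, rfl⟩ := h
  refine ⟨A⁻¹, by simpa using hA, ?_⟩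
  rw [transpose_nonsing_inv]
  calc A⁻¹ * (A * M * Aᵀ) * (Aᵀ)⁻¹
      = (A⁻¹ * A) * M * (Aᵀ * (Aᵀ)⁻¹) := by noncomm_ring
    _ = M := by
        rw [nonsing_inv_mul _ hA, mul_nonsing_inv _ (by simpa using hA)]
        simp

lemma Cong.exists_det {M N : Matrix α α F} (h : Cong M N) :
    ∃ c : F, c ≠ 0 ∧ N.det = c ^ 2 * M.det := by
  obtain ⟨A, hA, rfl⟩ := h
  exact ⟨A.det, hA.ne_zero, by rw [det_mul, det_mul, det_transpose]; ring⟩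

end Basic

lemma cong_diagonal_of_isSymm [Invertible (2 : F)] {n : ℕ} (M : Matrix (Fin n) (Fin n) F)
    (hM : M.IsSymm) : ∃ d : Fin n → F, Cong M (diagonal d) := by
  set B : (Fin n → F) →ₗ[F] (Fin n → F) →ₗ[F] F := Matrix.toLinearMap₂' F M with hB
  have hBs : B.IsSymm := by
    constructor
    intro x y
    simp only [hB, Matrix.toLinearMap₂'_apply, RingHom.id_apply]
    rw [Finset.sum_comm]
    refine Finset.sum_congr rfl fun i _ => Finset.sum_congr rfl fun j _ => ?_
    rw [smul_comm, hM.apply]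
  obtain ⟨v, hv⟩ := LinearMap.BilinForm.exists_orthogonal_basis hBs
  let v' := v.reindex (finCongr (Module.finrank_fin_fun F))
  have hv' : ∀ i j : Fin n, i ≠ j → B (v' i) (v' j) = 0 := by
    intro i j hij
    simp only [v', Module.Basis.reindex_apply]
    exact hv (fun h => hij (by simpa using congrArg (finCongr (Module.finrank_fin_fun F)) h))
  let P := (Pi.basisFun F (Fin n)).toMatrix v'
  have hMeq : LinearMap.toMatrix₂ (Pi.basisFun F (Fin n)) (Pi.basisFun F (Fin n)) B = M := by
    rw [LinearMap.toMatrix₂_basisFun, hB]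
    exact LinearEquiv.apply_symm_apply _ M
  have key : Pᵀ * M * P = LinearMap.toMatrix₂ v' v' B := by
    rw [← hMeq]
    exact LinearMap.toMatrix₂_mul_basis_toMatrix _ _ _ _ _
  have hdiag : LinearMap.toMatrix₂ v' v' B = diagonal (fun i => B (v' i) (v' i)) := by
    ext i j
    rcases eq_or_ne i j with rfl | h
    · simp [LinearMap.toMatrix₂_apply]
    · simp [LinearMap.toMatrix₂_apply, diagonal_apply_ne _ h, hv' i j h]
  haveI : Invertible P := (Pi.basisFun F (Fin n)).invertibleToMatrix v'
  refine ⟨fun i => B (v' i) (v' i), Pᵀ, ?_, ?_⟩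
  · rw [det_transpose]
    exact (isUnit_det_of_invertible P)
  · rw [transpose_transpose, key, hdiag]

lemma exists_rep [Fintype F] (hq : Fintype.card F % 2 = 1) (a b t : F) (ha : a ≠ 0)
    (hb : b ≠ 0) : ∃ x y : F, a * x ^ 2 + b * y ^ 2 = t := by
  have hdf : (C a * X ^ 2 + C (-t)).degree = 2 := by
    rw [degree_add_eq_left_of_degree_lt] <;>
      rw [degree_C_mul_X_pow 2 ha] <;> simp [degree_C_le]
    · exact lt_of_le_of_lt (degree_C_le) (by norm_num)
  have hdg : (C b * X ^ 2).degree = 2 := degree_C_mul_X_pow 2 hb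
  obtain ⟨x, y, hxy⟩ := FiniteField.exists_root_sum_quadratic hdf hdg hq
  refine ⟨x, y, ?_⟩
  simp only [eval_add, eval_mul, eval_pow, eval_C, eval_X] at hxy
  linear_combination hxy

lemma cong_two [Fintype F] (hq : Fintype.card F % 2 = 1) (a b t : F) (ha : a ≠ 0)
    (hb : b ≠ 0) (ht : t ≠ 0) :
    Cong (diagonal ![a, b]) (diagonal ![a * b * t, t]) := by
  obtain ⟨x, y, hxy⟩ := exists_rep hq a b t ha hb
  have h2 : diagonal ![a, b] = !![a, 0; 0, b] := by
    ext i j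
    fin_cases i <;> fin_cases j <;> simp [diagonal]
  have h3 : diagonal ![a * b * t, t] = !![a * b * t, 0; 0, t] := by
    ext i j
    fin_cases i <;> fin_cases j <;> simp [diagonal]
  refine ⟨!![b * y, -(a * x); x, y], ?_, ?_⟩
  · have hdet : (!![b * y, -(a * x); x, y]).det = t := by
      rw [det_fin_two_of]
      linear_combination hxy
    rw [hdet]
    exact ht.isUnit
  · rw [h2, h3]
    ext i j
    fin_cases i <;> fin_cases j <;>
      · simp [Matrix.mul_apply, Fin.sum_univ_two, Matrix.vecHead, Matrix.vecTail]
        try linear_combination (a * b) * hxy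
        try linear_combination hxy
        try ring

lemma Cong.append {a b : ℕ} {f₁ g₁ : Fin a → F} {f₂ g₂ : Fin b → F}
    (h₁ : Cong (diagonal f₁) (diagonal g₁)) (h₂ : Cong (diagonal f₂) (diagonal g₂)) :
    Cong (diagonal (Fin.append f₁ f₂)) (diagonal (Fin.append g₁ g₂)) := by
  obtain ⟨A₁, hA₁, hA₁e⟩ := h₁
  obtain ⟨A₂, hA₂, hA₂e⟩ := h₂
  have hsum : (fromBlocks A₁ 0 0 A₂) * diagonal (Sum.elim f₁ f₂) * (fromBlocks A₁ 0 0 A₂)ᵀ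
      = diagonal (Sum.elim g₁ g₂) := by
    rw [← fromBlocks_diagonal, ← fromBlocks_diagonal, fromBlocks_transpose, fromBlocks_multiply,
      fromBlocks_multiply]
    simp [hA₁e, hA₂e]
  have happ : ∀ h : Fin a → F, ∀ k : Fin b → F,
      (reindex finSumFinEquiv finSumFinEquiv) (diagonal (Sum.elim h k))
        = diagonal (Fin.append h k) := by
    intro h k
    rw [reindex_apply, submatrix_diagonal_equiv]
    have : (Sum.elim h k) ∘ finSumFinEquiv.symm = Fin.append h k := by
      funext i
      obtain ⟨x, rfl⟩ := finSumFinEquiv.surjective i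
      rcases x with x | x <;> simp [Fin.append_left, Fin.append_right]
    rw [this]
  refine ⟨(reindex finSumFinEquiv finSumFinEquiv) (fromBlocks A₁ 0 0 A₂), ?_, ?_⟩
  · rw [det_reindex_self, det_fromBlocks_zero₂₁]
    exact hA₁.mul hA₂
  · rw [← happ f₁ f₂, ← happ g₁ g₂, transpose_reindex]
    simp only [← reindexAlgEquiv_apply F F]
    rw [← _root_.map_mul, ← _root_.map_mul, hsum]

omit [Field F] in
lemma append_two_eq_snoc {k : ℕ} (u : Fin k → F) (p q : F) :
    Fin.append u ![p, q] = Fin.snoc (Fin.snoc u p) q := by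
  have h : ![p, q] = Fin.snoc ![p] q := by
    funext i
    fin_cases i <;> simp [Fin.snoc]
  rw [h, Fin.append_snoc, Fin.append_right_eq_snoc]
  simp

lemma cong_diag_diag [Fintype F] (hq : Fintype.card F % 2 = 1) :
    ∀ n (d e : Fin n → F), (∀ i, d i ≠ 0) → (∀ i, e i ≠ 0) →
      (∃ c : F, c ≠ 0 ∧ ∏ i, e i = c ^ 2 * ∏ i, d i) →
      Cong (diagonal d) (diagonal e) := by
  intro n
  induction n with
  | zero =>
    intro d e _ _ _
    have : d = e := funext fun i => i.elim0
    rw [this]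
    exact Cong.refl _
  | succ k IH =>
    rcases k with _ | k
    · rintro d e hd he ⟨c, hc, hprod⟩
      rw [Fin.prod_univ_one, Fin.prod_univ_one] at hprod
      refine ⟨diagonal (fun _ => c), ?_, ?_⟩
      · have : (diagonal (fun _ : Fin 1 => c)).det = c := by simp
        rw [this]
        exact hc.isUnit
      · rw [diagonal_transpose, diagonal_mul_diagonal, diagonal_mul_diagonal]
        have : (fun i => c * d i * c) = e := by
          funext i
          have hi : i = 0 := by
            ext
            omega
          rw [hi]
          linear_combination -hprod
        rw [this]
    · rintro d e hd he ⟨c, hc, hprod⟩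
      set t := e (Fin.last (k + 1)) with htdef
      set a := d (Fin.castSucc (Fin.last k)) with hadef
      set b := d (Fin.last (k + 1)) with hbdef
      set dt : Fin k → F := fun i => d (Fin.castSucc (Fin.castSucc i)) with hdt
      have ht : t ≠ 0 := he _
      have ha : a ≠ 0 := hd _
      have hb : b ≠ 0 := hd _
      have hd2 : d = Fin.snoc (Fin.snoc dt a) b := by
        funext i
        refine Fin.lastCases ?_ (fun j => ?_) i
        · simp [hbdef]
        · rw [Fin.snoc_castSucc]
          refine Fin.lastCases ?_ (fun l => ?_) j
          · simp [hadef]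
          · simp [hdt]
      have he2 : e = Fin.snoc (fun i => e (Fin.castSucc i)) t := by
        funext i
        refine Fin.lastCases ?_ (fun j => ?_) i <;> simp [htdef]
      have step1 : Cong (diagonal d) (diagonal (Fin.snoc (Fin.snoc dt (a * b * t)) t)) := by
        rw [hd2, ← append_two_eq_snoc, ← append_two_eq_snoc]
        exact Cong.append (Cong.refl _) (cong_two hq a b t ha hb ht)
      have habt : a * b * t ≠ 0 := mul_ne_zero (mul_ne_zero ha hb) ht
      have step2 : Cong (diagonal (Fin.snoc dt (a * b * t) : Fin (k+1) → F))
          (diagonal (fun i => e (Fin.castSucc i))) := by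
        refine IH _ _ ?_ ?_ ⟨c / t, div_ne_zero hc ht, ?_⟩
        · intro i
          refine Fin.lastCases ?_ (fun j => ?_) i
          · simpa using habt
          · simpa using hd _
        · intro i
          exact he _
        · have h1 : ∏ i, e i = (∏ i, e (Fin.castSucc i)) * t := by
            rw [Fin.prod_univ_castSucc]
          have h2 : ∏ i, d i = ((∏ i, dt i) * a) * b := by
            rw [Fin.prod_univ_castSucc, Fin.prod_univ_castSucc]
          have h3 : ∏ i, (Fin.snoc dt (a * b * t) : Fin (k+1) → F) i
              = (∏ i, dt i) * (a * b * t) := by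
            rw [Fin.prod_univ_castSucc]
            simp
          rw [h1, h2] at hprod
          rw [h3]
          field_simp
          linear_combination hprod
      have step3 : Cong (diagonal (Fin.snoc (Fin.snoc dt (a * b * t)) t)) (diagonal e) := by
        have := Cong.append step2 (Cong.refl (diagonal ![t]))
        rw [Fin.append_right_eq_snoc, Fin.append_right_eq_snoc] at this
        simpa [← he2] using this
      exact Cong.trans step1 step3

end EquivRankDisc

open EquivRankDisc

/-- Over a finite field of odd order, two nondegenerate symmetric bilinear forms
(Gram matrices `M`, `N`) are equivalent iff they have the same dimension and
their discriminants lie in the same square class. -/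
theorem equivalence_iff_rank_discriminant
    (F : Type*) [Field F] [Fintype F] (hq : Odd (Fintype.card F))
    (n m : ℕ)
    (M : Matrix (Fin n) (Fin n) F) (hM : M.IsSymm) (hMdet : IsUnit M.det)
    (N : Matrix (Fin m) (Fin m) F) (hN : N.IsSymm) (hNdet : IsUnit N.det) :
    (∃ h : n = m, ∃ A : Matrix (Fin m) (Fin m) F, IsUnit A.det ∧
        A * (Matrix.reindex (finCongr h) (finCongr h) M) * Aᵀ = N) ↔
      (n = m ∧ ∃ c : F, c ≠ 0 ∧ N.det = c ^ 2 * M.det) := by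
  have hcard : Fintype.card F % 2 = 1 := Nat.odd_iff.mp hq
  constructor
  · rintro ⟨rfl, A, hA, hAe⟩
    refine ⟨rfl, A.det, hA.ne_zero, ?_⟩
    rw [← hAe]
    simp only [finCongr_refl, reindex_refl_refl, Equiv.refl_apply]
    rw [det_mul, det_mul, det_transpose]
    ring
  · rintro ⟨rfl, c, hc, hdet⟩
    refine ⟨rfl, ?_⟩
    simp only [finCongr_refl, reindex_refl_refl, Equiv.refl_apply]
    have hchar : ringChar F ≠ 2 := fun h => by
      rw [FiniteField.even_card_iff_char_two.mp h] at hcard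
      norm_num at hcard
    haveI : Invertible (2 : F) := invertibleOfNonzero (Ring.two_ne_zero hchar)
    obtain ⟨d, hMd⟩ := cong_diagonal_of_isSymm M hM
    obtain ⟨f, hNf⟩ := cong_diagonal_of_isSymm N hN
    obtain ⟨cd, hcd, hdd⟩ := hMd.exists_det
    obtain ⟨cf, hcf, hff⟩ := hNf.exists_det
    rw [det_diagonal] at hdd
    rw [det_diagonal] at hff
    have hd0 : ∀ i, d i ≠ 0 := by
      have : (∏ i, d i) ≠ 0 := by
        rw [hdd]
        exact mul_ne_zero (pow_ne_zero 2 hcd) hMdet.ne_zero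
      intro i hi
      exact this (Finset.prod_eq_zero (Finset.mem_univ i) hi)
    have hf0 : ∀ i, f i ≠ 0 := by
      have : (∏ i, f i) ≠ 0 := by
        rw [hff]
        exact mul_ne_zero (pow_ne_zero 2 hcf) hNdet.ne_zero
      intro i hi
      exact this (Finset.prod_eq_zero (Finset.mem_univ i) hi)
    have hmid : Cong (diagonal d) (diagonal f) := by
      refine cong_diag_diag hcard _ d f hd0 hf0 ⟨cf * c / cd, ?_, ?_⟩
      · exact div_ne_zero (mul_ne_zero hcf hc) hcd
      · rw [hff, hdd, hdet]
        field_simp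
    exact (hMd.trans hmid).trans hNf.symm
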